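/- arXiv:1812.10513 — 3 statements merged into one kernel-verified Lean document; each statement's English description precedes it below -/
import Mathlib

section
/- There exists a summable sequence (M_n)_{n≥1} of nonnegative real numbers such that for every n ≥ 1 and every x ∈ [−π, 2π]: | cos(ρ_n x)/α_n − (2/π) cos(nx) + (2ωx/(π² n)) sin(nx) | ≤ M_n. Consequently, the series Σ_{n=1}^∞ ( cos(ρ_n x)/α_n − (2/π) cos(nx) + (2ωx/(π² n)) sin(nx) ) converges absolutely and uniformly on [−π, 2π], and its sum is a continuous function of x on [−π, 2π]. -/
open Real Filter Topology


lemma aux_one_sub_cos (h : ℝ) : |Real.cos h - 1| ≤ h ^ 2 / 2 := by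
  have h1 := Real.one_sub_sq_div_two_le_cos (x := h)
  have h2 := Real.cos_le_one h
  rw [abs_le]; constructor <;> nlinarith

lemma aux_sub_sin_nonneg (h : ℝ) (hh : 0 ≤ h) : h - Real.sin h ≤ h ^ 2 / 2 := by
  have key : ∀ x : ℝ, HasDerivAt (fun t => t ^ 2 / 2 - t + Real.sin t)
      (x - 1 + Real.cos x) x := by
    intro x
    have h1 := (((hasDerivAt_pow 2 x).div_const 2).sub (hasDerivAt_id x)).add
      (Real.hasDerivAt_sin x)
    refine h1.congr_deriv ?_
    norm_num
  have mono : MonotoneOn (fun t : ℝ => t ^ 2 / 2 - t + Real.sin t) (Set.Ici 0) := by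
    apply monotoneOn_of_deriv_nonneg (convex_Ici 0)
    · exact (Continuous.continuousOn (by continuity))
    · intro x hx
      exact (key x).differentiableAt.differentiableWithinAt
    · intro x hx
      rw [(key x).deriv]
      rcases le_or_gt x 2 with hx2 | hx2
      · have := Real.one_sub_sq_div_two_le_cos (x := x)
        simp only [interior_Ici, Set.mem_Ioi] at hx
        nlinarith
      · have := Real.neg_one_le_cos x
        linarith
  have := mono Set.self_mem_Ici (Set.mem_Ici.mpr hh) hh
  simp at this
  linarith

lemma aux_sub_sin (h : ℝ) : |h - Real.sin h| ≤ h ^ 2 / 2 := by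
  rcases le_or_gt 0 h with hh | hh
  · rw [abs_of_nonneg (by nlinarith [Real.sin_le hh])]
    exact aux_sub_sin_nonneg h hh
  · have hs := Real.sin_le (x := -h) (by linarith : (0:ℝ) ≤ -h)
    rw [Real.sin_neg] at hs
    have := aux_sub_sin_nonneg (-h) (by linarith)
    rw [Real.sin_neg] at this
    rw [abs_of_nonpos (by linarith)]
    nlinarith

lemma aux_cos_shift (a h : ℝ) : |Real.cos (a + h) - Real.cos a + h * Real.sin a| ≤ h ^ 2 := by
  have key : Real.cos (a + h) - Real.cos a + h * Real.sin a
      = Real.cos a * (Real.cos h - 1) + Real.sin a * (h - Real.sin h) := by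
    rw [Real.cos_add]; ring
  rw [key]
  calc |Real.cos a * (Real.cos h - 1) + Real.sin a * (h - Real.sin h)|
      ≤ |Real.cos a * (Real.cos h - 1)| + |Real.sin a * (h - Real.sin h)| := abs_add_le _ _
    _ ≤ 1 * (h ^ 2 / 2) + 1 * (h ^ 2 / 2) := by
        rw [abs_mul, abs_mul]
        gcongr
        · exact Real.abs_cos_le_one a
        · exact aux_one_sub_cos h
        · exact Real.abs_sin_le_one a
        · exact aux_sub_sin h
    _ = h ^ 2 := by ring

lemma aux_summable_abs_div (K : ℕ → ℝ) (hK : Summable (fun n => (K n) ^ 2)) :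
    Summable (fun n : ℕ => |K n| / n) := by
  have hs : Summable (fun n : ℕ => ((K n) ^ 2 + (1 / (n:ℝ)) ^ 2) / 2) := by
    have hs2 : Summable (fun n : ℕ => (1 / (n:ℝ)) ^ 2) := by
      simpa [one_div_pow] using (Real.summable_one_div_nat_pow (p := 2)).mpr one_lt_two
    exact (hK.add hs2).div_const 2
  apply Summable.of_nonneg_of_le (fun n => by positivity) _ hs
  · intro n
    have heq : |K n| / (n : ℝ) = |K n| * (1 / n) := by ring
    rw [heq]
    nlinarith [sq_nonneg (|K n| - 1 / (n:ℝ)), sq_abs (K n)]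


lemma aux_alpha_lb (α : ℕ → ℝ) (hpos : ∀ n : ℕ, 1 ≤ n → 0 < α n) (K : ℕ → ℝ)
    (hK : Summable (fun n => (K n) ^ 2))
    (hαa : ∀ n : ℕ, 1 ≤ n → α n = π / 2 + K n / n) :
    ∃ c : ℝ, 0 < c ∧ ∀ n : ℕ, 1 ≤ n → c ≤ α n := by
  have hK0 : Tendsto (fun n => (K n) ^ 2) atTop (nhds 0) := hK.tendsto_atTop_zero
  have habs : Tendsto (fun n => |K n|) atTop (nhds 0) := by
    have h1 : Tendsto (fun n => Real.sqrt ((K n) ^ 2)) atTop (nhds (Real.sqrt 0)) :=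
      (Real.continuous_sqrt.tendsto 0).comp hK0
    simpa [Real.sqrt_sq_eq_abs] using h1
  have hKz : Tendsto K atTop (nhds 0) := by
    exact tendsto_zero_iff_abs_tendsto_zero K |>.mpr habs
  have hKn : Tendsto (fun n : ℕ => K n / n) atTop (nhds 0) := by
    have := hKz.mul tendsto_one_div_atTop_nhds_zero_nat
    simpa [div_eq_mul_inv, one_div] using this
  have hev : ∀ᶠ n : ℕ in atTop, |K n / n| < π / 4 := by
    have hopen : {y : ℝ | |y| < π / 4} ∈ nhds (0 : ℝ) := by
      apply (isOpen_lt continuous_abs continuous_const).mem_nhds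
      simp only [Set.mem_setOf_eq, abs_zero]
      positivity
    exact hKn.eventually hopen
  obtain ⟨N, hN⟩ := eventually_atTop.mp hev
  have hge : ∀ n : ℕ, N ≤ n → 1 ≤ n → π / 4 ≤ α n := by
    intro n hn h1
    rw [hαa n h1]
    have := (abs_lt.mp (hN n hn)).1
    linarith
  by_cases hNe : (Finset.Icc 1 N).Nonempty
  · set m := (Finset.Icc 1 N).inf' hNe α with hm
    obtain ⟨i, hi, him⟩ := Finset.exists_mem_eq_inf' hNe α
    have hmpos : 0 < m := by
      rw [hm, him]
      exact hpos i (Finset.mem_Icc.mp hi).1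
    refine ⟨min m (π / 4), lt_min hmpos (by positivity), fun n hn => ?_⟩
    rcases le_or_gt n N with h | h
    · exact le_trans (min_le_left _ _) (Finset.inf'_le α (Finset.mem_Icc.mpr ⟨hn, h⟩))
    · exact le_trans (min_le_right _ _) (hge n h.le hn)
  · refine ⟨π / 4, by positivity, fun n hn => ?_⟩
    apply hge n _ hn
    by_contra hcon
    exact hNe ⟨n, Finset.mem_Icc.mpr ⟨hn, by omega⟩⟩



lemma aux_key (ω : ℝ) (ρ α : ℕ → ℝ) (k K : ℕ → ℝ) (c : ℝ) (hc : 0 < c)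
    (hcα : ∀ n : ℕ, 1 ≤ n → c ≤ α n)
    (hρa : ∀ n : ℕ, 1 ≤ n → ρ n = n + ω / (π * n) + k n / n)
    (hαa : ∀ n : ℕ, 1 ≤ n → α n = π / 2 + K n / n)
    (n : ℕ) (hn : 1 ≤ n) (x : ℝ) (hx : x ∈ Set.Icc (-π) (2 * π)) :
    |cos (ρ n * x) / α n - (2 / π) * cos (n * x) +
        (2 * ω * x / (π ^ 2 * n)) * sin (n * x)| ≤
      (2 / (π * c)) * (|K n| / n) + 8 * π * (|ω| / π + |k n|) ^ 2 * (1 / n) ^ 2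
        + 4 * (|k n| / n) := by
  have hπ := pi_pos
  have hn0 : (0 : ℝ) < n := by exact_mod_cast hn
  have hαn : c ≤ α n := hcα n hn
  have hα0 : 0 < α n := lt_of_lt_of_le hc hαn
  have hxb : |x| ≤ 2 * π := by
    rw [abs_le]
    exact ⟨by linarith [hx.1], hx.2⟩
  set a : ℝ := n * x with ha
  set h : ℝ := (ω / (π * n) + k n / n) * x with hh
  have hρx : ρ n * x = a + h := by rw [hρa n hn]; ring
  have hid : cos (ρ n * x) / α n - (2 / π) * cos (n * x) +
      (2 * ω * x / (π ^ 2 * n)) * sin (n * x)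
      = cos (a + h) * (1 / α n - 2 / π)
        + (2 / π) * (cos (a + h) - cos a + h * sin a)
        + (2 / π) * (-(k n * x / n)) * sin a := by
    rw [hρx, ha, hh]
    field_simp
    ring
  rw [hid]
  have hA : |cos (a + h) * (1 / α n - 2 / π)| ≤ (2 / (π * c)) * (|K n| / n) := by
    have h2 : π - 2 * α n = -(2 * (K n / n)) := by rw [hαa n hn]; ring
    have heq : 1 / α n - 2 / π = -(2 * (K n / n)) / (π * α n) := by
      rw [← h2]
      field_simp
    rw [abs_mul, heq]
    calc |cos (a + h)| * |(-(2 * (K n / n))) / (π * α n)|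
        ≤ 1 * ((2 * (|K n| / n)) / (π * c)) := by
          apply mul_le_mul (Real.abs_cos_le_one _) _ (abs_nonneg _) zero_le_one
          rw [abs_div, abs_neg, abs_mul, abs_div, abs_of_pos (mul_pos hπ hα0)]
          rw [Nat.abs_cast]
          apply div_le_div₀ (by positivity) (by norm_num) (by positivity)
          · exact mul_le_mul_of_nonneg_left hαn hπ.le
      _ = (2 / (π * c)) * (|K n| / n) := by ring
  have hhb : |h| ≤ (|ω| / π + |k n|) * (1 / n) * (2 * π) := by
    rw [hh, abs_mul]
    apply mul_le_mul _ hxb (abs_nonneg _) (by positivity)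
    calc |ω / (π * n) + k n / n| ≤ |ω / (π * n)| + |k n / n| := abs_add_le _ _
      _ = (|ω| / π + |k n|) * (1 / n) := by
          rw [abs_div, abs_div, abs_of_pos (mul_pos hπ hn0), Nat.abs_cast]
          field_simp
  have hB : |(2 / π) * (cos (a + h) - cos a + h * sin a)|
      ≤ 8 * π * (|ω| / π + |k n|) ^ 2 * (1 / n) ^ 2 := by
    rw [abs_mul, abs_of_pos (by positivity : (0:ℝ) < 2 / π)]
    calc (2 / π) * |cos (a + h) - cos a + h * sin a|
        ≤ (2 / π) * h ^ 2 := by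
          apply mul_le_mul_of_nonneg_left (aux_cos_shift a h) (by positivity)
      _ ≤ (2 / π) * ((|ω| / π + |k n|) * (1 / n) * (2 * π)) ^ 2 := by
          apply mul_le_mul_of_nonneg_left _ (by positivity)
          rw [← sq_abs h]
          exact pow_le_pow_left₀ (abs_nonneg _) hhb 2
      _ = 8 * π * (|ω| / π + |k n|) ^ 2 * (1 / n) ^ 2 := by
          field_simp
          ring
  have hC : |(2 / π) * (-(k n * x / n)) * sin a| ≤ 4 * (|k n| / n) := by
    simp only [abs_mul, abs_neg, abs_div, Nat.abs_cast, abs_two, abs_of_pos hπ]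
    calc 2 / π * (|k n| * |x| / n) * |sin a|
        ≤ 2 / π * (|k n| * (2 * π) / n) * 1 := by
          gcongr
          exact Real.abs_sin_le_one _
      _ = 4 * (|k n| / n) := by field_simp; ring
  calc |cos (a + h) * (1 / α n - 2 / π)
        + (2 / π) * (cos (a + h) - cos a + h * sin a)
        + (2 / π) * (-(k n * x / n)) * sin a|
      ≤ |cos (a + h) * (1 / α n - 2 / π)
        + (2 / π) * (cos (a + h) - cos a + h * sin a)|
        + |(2 / π) * (-(k n * x / n)) * sin a| := abs_add_le _ _
    _ ≤ |cos (a + h) * (1 / α n - 2 / π)|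
        + |(2 / π) * (cos (a + h) - cos a + h * sin a)|
        + |(2 / π) * (-(k n * x / n)) * sin a| := by
          linarith [abs_add_le (cos (a + h) * (1 / α n - 2 / π))
            ((2 / π) * (cos (a + h) - cos a + h * sin a))]
    _ ≤ _ := by
          have := hA; have := hB; have := hC
          linarith


/-- Under the asymptotics ρ_n = n + ω/(πn) + k_n/n, α_n = π/2 + K_n/n with
(k_n), (K_n) ∈ ℓ², there exists a summable sequence (M_n)_{n≥1} of nonnegative
numbers dominating |cos(ρ_n x)/α_n − (2/π)cos(nx) + (2ωx/(π²n))sin(nx)| on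
[−π, 2π]; consequently the corresponding series converges absolutely and
uniformly on [−π, 2π], and its sum is continuous there. -/
theorem stmt_7 (ω : ℝ) (ρ α : ℕ → ℝ)
    (hρ : ∀ n : ℕ, 1 ≤ n → 0 < ρ n) (hα : ∀ n : ℕ, 1 ≤ n → 0 < α n)
    (k K : ℕ → ℝ) (hk : Summable (fun n => (k n) ^ 2)) (hK : Summable (fun n => (K n) ^ 2))
    (hρa : ∀ n : ℕ, 1 ≤ n → ρ n = n + ω / (π * n) + k n / n)
    (hαa : ∀ n : ℕ, 1 ≤ n → α n = π / 2 + K n / n) :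
    (∃ M : ℕ → ℝ, (∀ n, 0 ≤ M n) ∧ Summable M ∧
      ∀ n : ℕ, 1 ≤ n → ∀ x ∈ Set.Icc (-π) (2 * π),
        |cos (ρ n * x) / α n - (2 / π) * cos (n * x) +
          (2 * ω * x / (π ^ 2 * n)) * sin (n * x)| ≤ M n) ∧
    (∀ x ∈ Set.Icc (-π) (2 * π),
      Summable (fun n : ℕ =>
        |cos (ρ (n + 1) * x) / α (n + 1) - (2 / π) * cos (((n : ℝ) + 1) * x) +
          (2 * ω * x / (π ^ 2 * ((n : ℝ) + 1))) * sin (((n : ℝ) + 1) * x)|)) ∧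
    TendstoUniformlyOn
      (fun (N : ℕ) (x : ℝ) => ∑ n ∈ Finset.range N,
        (cos (ρ (n + 1) * x) / α (n + 1) - (2 / π) * cos (((n : ℝ) + 1) * x) +
          (2 * ω * x / (π ^ 2 * ((n : ℝ) + 1))) * sin (((n : ℝ) + 1) * x)))
      (fun x : ℝ => ∑' n : ℕ,
        (cos (ρ (n + 1) * x) / α (n + 1) - (2 / π) * cos (((n : ℝ) + 1) * x) +
          (2 * ω * x / (π ^ 2 * ((n : ℝ) + 1))) * sin (((n : ℝ) + 1) * x)))
      atTop (Set.Icc (-π) (2 * π)) ∧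
    ContinuousOn
      (fun x : ℝ => ∑' n : ℕ,
        (cos (ρ (n + 1) * x) / α (n + 1) - (2 / π) * cos (((n : ℝ) + 1) * x) +
          (2 * ω * x / (π ^ 2 * ((n : ℝ) + 1))) * sin (((n : ℝ) + 1) * x)))
      (Set.Icc (-π) (2 * π)) := by
  obtain ⟨c, hc, hcα⟩ := aux_alpha_lb α hα K hK hαa
  have hπ := pi_pos
  have hπc : (0:ℝ) < π * c := mul_pos hπ hc
  set M : ℕ → ℝ := fun n =>
    (2 / (π * c)) * (|K n| / n) + 8 * π * (|ω| / π + |k n|) ^ 2 * (1 / n) ^ 2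
      + 4 * (|k n| / n) with hMdef
  have hMnn : ∀ n, 0 ≤ M n := by
    intro n
    have h1 : (0:ℝ) ≤ 2 / (π * c) := div_nonneg (by norm_num) hπc.le
    have h2 : (0:ℝ) ≤ |K n| / n := by positivity
    have h3 : (0:ℝ) ≤ 8 * π * (|ω| / π + |k n|) ^ 2 * (1 / (n:ℝ)) ^ 2 := by positivity
    have h4 : (0:ℝ) ≤ 4 * (|k n| / n) := by positivity
    have := mul_nonneg h1 h2
    simp only [hMdef]
    linarith
  have hs2 : Summable (fun n : ℕ => (1 / (n:ℝ)) ^ 2) := by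
    simpa [one_div_pow] using (Real.summable_one_div_nat_pow (p := 2)).mpr one_lt_two
  have hMsum : Summable M := by
    apply Summable.add
    apply Summable.add
    · exact (aux_summable_abs_div K hK).mul_left _
    · have hg : Summable (fun n : ℕ =>
          8 * π * (2 * (|ω| / π) ^ 2 * (1 / (n:ℝ)) ^ 2 + 2 * (k n) ^ 2)) :=
        ((hs2.mul_left _).add (hk.mul_left 2)).mul_left _
      apply Summable.of_nonneg_of_le (fun n => by positivity) _ hg
      intro n
      have ht1 : (1:ℝ) / n ≤ 1 := by
        rcases Nat.eq_zero_or_pos n with rfl | hn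
        · norm_num
        · rw [div_le_one (by exact_mod_cast hn)]
          exact_mod_cast hn
      have ht0 : (0:ℝ) ≤ 1 / n := by positivity
      have hsq : ((1:ℝ) / n) ^ 2 ≤ 1 := by nlinarith
      rw [← sq_abs (k n)]
      nlinarith [mul_nonneg pi_pos.le
          (mul_nonneg (sq_nonneg (|ω| / π - |k n|)) (sq_nonneg (1 / (n:ℝ)))),
        mul_nonneg pi_pos.le (mul_nonneg (sq_nonneg |k n|) (sub_nonneg.mpr hsq))]
    · exact (aux_summable_abs_div k hk).mul_left 4
  have key : ∀ n : ℕ, 1 ≤ n → ∀ x ∈ Set.Icc (-π) (2 * π),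
      |cos (ρ n * x) / α n - (2 / π) * cos (n * x) +
        (2 * ω * x / (π ^ 2 * n)) * sin (n * x)| ≤ M n :=
    fun n hn x hx => aux_key ω ρ α k K c hc hcα hρa hαa n hn x hx
  have hFbound : ∀ (n : ℕ) (x : ℝ), x ∈ Set.Icc (-π) (2 * π) →
      ‖cos (ρ (n + 1) * x) / α (n + 1) - (2 / π) * cos (((n : ℝ) + 1) * x) +
        (2 * ω * x / (π ^ 2 * ((n : ℝ) + 1))) * sin (((n : ℝ) + 1) * x)‖ ≤ M (n + 1) := by
    intro n x hx
    rw [Real.norm_eq_abs]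
    have hcast : ((n : ℝ) + 1) = ((n + 1 : ℕ) : ℝ) := by push_cast; ring
    rw [hcast]
    exact key (n + 1) (by omega) x hx
  have hMsum' : Summable (fun n => M (n + 1)) := (summable_nat_add_iff 1).mpr hMsum
  have hTU : TendstoUniformlyOn
      (fun (N : ℕ) (x : ℝ) => ∑ n ∈ Finset.range N,
        (cos (ρ (n + 1) * x) / α (n + 1) - (2 / π) * cos (((n : ℝ) + 1) * x) +
          (2 * ω * x / (π ^ 2 * ((n : ℝ) + 1))) * sin (((n : ℝ) + 1) * x)))
      (fun x : ℝ => ∑' n : ℕ,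
        (cos (ρ (n + 1) * x) / α (n + 1) - (2 / π) * cos (((n : ℝ) + 1) * x) +
          (2 * ω * x / (π ^ 2 * ((n : ℝ) + 1))) * sin (((n : ℝ) + 1) * x)))
      atTop (Set.Icc (-π) (2 * π)) :=
    tendstoUniformlyOn_tsum_nat hMsum' hFbound
  refine ⟨⟨M, hMnn, hMsum, key⟩, ?_, hTU, ?_⟩
  · intro x hx
    apply Summable.of_nonneg_of_le (fun n => abs_nonneg _) _ hMsum'
    intro n
    have := hFbound n x hx
    rwa [Real.norm_eq_abs] at this
  · apply hTU.continuousOn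
    refine Filter.Eventually.frequently ?_
    filter_upwards with N
    apply Continuous.continuousOn
    apply continuous_finset_sum
    intro i _
    fun_prop
end

section
/- The series Σ_{n=0}^∞ sup_{x,t ∈ [0,π]} | cos(ρ_n x)( c(ρ_n,t) − cos(ρ_n t) )/α_n − cos(nx)( c(n,t) − cos(nt) )/α_n^0 | converges; that is, the terms Δ_n(x,t) = ( cos(ρ_n x) c(ρ_n,t)/α_n − cos(nx) c(n,t)/α_n^0 ) − ( cos(ρ_n x) cos(ρ_n t)/α_n − cos(nx) cos(nt)/α_n^0 ) form an absolutely and uniformly convergent series of continuous functions on [0,π] × [0,π]. -/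
open Real Filter Topology

private lemma ofReal_hdwa {f : ℝ → ℝ} {f' x : ℝ} {s : Set ℝ} (hf : HasDerivWithinAt f f' s x) :
    HasDerivWithinAt (fun y => ((f y : ℝ) : ℂ)) (f' : ℂ) s x := by
  simpa [Function.comp_def] using Complex.ofRealCLM.hasFDerivAt.comp_hasDerivWithinAt x hf

private lemma hasDerivWithinAt_coscos (ρ t : ℝ) (s : Set ℝ) :
    HasDerivWithinAt (fun t => Real.cos (ρ * t)) (-ρ * Real.sin (ρ * t)) s t := by
  have h1 : HasDerivAt (fun t : ℝ => ρ * t) ρ t := by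
    simpa using (hasDerivAt_id t).const_mul ρ
  have := (Real.hasDerivAt_cos (ρ * t)).comp t h1
  simpa [mul_comm, Function.comp_def] using this.hasDerivWithinAt

private lemma hasDerivWithinAt_sinsin (ρ t : ℝ) (s : Set ℝ) :
    HasDerivWithinAt (fun t => Real.sin (ρ * t)) (ρ * Real.cos (ρ * t)) s t := by
  have h1 : HasDerivAt (fun t : ℝ => ρ * t) ρ t := by
    simpa using (hasDerivAt_id t).const_mul ρ
  have := (Real.hasDerivAt_sin (ρ * t)).comp t h1
  simpa [mul_comm, Function.comp_def] using this.hasDerivWithinAt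

private lemma abs_cos_sub_cos_le' (a b : ℝ) : |Real.cos a - Real.cos b| ≤ |a - b| := by
  have hd : ∀ x ∈ (Set.univ : Set ℝ), HasDerivWithinAt Real.cos (-Real.sin x) Set.univ x :=
    fun x _ => (Real.hasDerivAt_cos x).hasDerivWithinAt
  have hb : ∀ x ∈ (Set.univ : Set ℝ), ‖-Real.sin x‖ ≤ 1 := by
    intro x _; rw [norm_neg, Real.norm_eq_abs]; exact Real.abs_sin_le_one x
  have := Convex.norm_image_sub_le_of_norm_hasDerivWithin_le hd hb convex_univ
    (Set.mem_univ b) (Set.mem_univ a)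
  simpa using this

/-- Energy estimate for u'' = -σ²u + g on [0,π]. -/
private lemma energy (σ : ℝ) (hσ : 0 < σ) (u u' g : ℝ → ℝ) (G : ℝ)
    (hu : ∀ t ∈ Set.Icc (0:ℝ) π, HasDerivWithinAt u (u' t) (Set.Icc 0 π) t)
    (hu' : ∀ t ∈ Set.Icc (0:ℝ) π, HasDerivWithinAt u' (-σ^2 * u t + g t) (Set.Icc 0 π) t)
    (hg : ∀ t ∈ Set.Icc (0:ℝ) π, |g t| ≤ G) :
    ∀ t ∈ Set.Icc (0:ℝ) π, σ * |u t| ≤ σ * |u 0| + |u' 0| + G * π := by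
  have h0 : (0:ℝ) ∈ Set.Icc (0:ℝ) π := ⟨le_refl _, Real.pi_pos.le⟩
  set F : ℝ → ℂ := fun t => Complex.exp (σ * t * Complex.I) *
    ((σ : ℂ) * (u t : ℂ) + (u' t : ℂ) * Complex.I) with hF
  have hFd : ∀ t ∈ Set.Icc (0:ℝ) π,
      HasDerivWithinAt F (Complex.exp (σ * t * Complex.I) * ((g t : ℂ) * Complex.I))
        (Set.Icc 0 π) t := by
    intro t ht
    have he : HasDerivWithinAt (fun t : ℝ => Complex.exp (σ * t * Complex.I))
        (Complex.exp (σ * t * Complex.I) * (σ * Complex.I)) (Set.Icc 0 π) t := by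
      have harg : HasDerivAt (fun t : ℝ => (σ : ℂ) * (t : ℂ) * Complex.I)
          ((σ:ℂ) * Complex.I) t := by
        have h1 : HasDerivAt (fun t : ℝ => ((t:ℝ) : ℂ)) 1 t := by
          simpa using (hasDerivAt_id t).ofReal_comp
        simpa [mul_comm, mul_assoc, mul_left_comm] using (h1.const_mul (σ:ℂ)).mul_const Complex.I
      exact (harg.cexp).hasDerivWithinAt
    have hu1 := ofReal_hdwa (hu t ht)
    have hu2 := ofReal_hdwa (hu' t ht)
    have hinner : HasDerivWithinAt (fun t => (σ : ℂ) * (u t : ℂ) + (u' t : ℂ) * Complex.I)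
        ((σ : ℂ) * (u' t : ℂ) + ((-σ^2 * u t + g t : ℝ) : ℂ) * Complex.I) (Set.Icc 0 π) t :=
      (hu1.const_mul _).add (hu2.mul_const _)
    have := he.mul hinner
    refine this.congr_deriv ?_
    push_cast
    ring_nf
    rw [Complex.I_sq]
    ring
  have hexp1 : ∀ t : ℝ, ‖Complex.exp ((σ : ℂ) * (t : ℂ) * Complex.I)‖ = 1 := by
    intro t
    rw [Complex.norm_exp]
    simp
  have hnorm : ∀ t ∈ Set.Icc (0:ℝ) π,
      ‖Complex.exp (σ * t * Complex.I) * ((g t : ℂ) * Complex.I)‖ ≤ G := by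
    intro t ht
    rw [norm_mul, hexp1, one_mul, norm_mul]
    simpa [Complex.norm_real, Real.norm_eq_abs] using hg t ht
  intro t ht
  have key : ‖F t - F 0‖ ≤ G * ‖t - 0‖ :=
    Convex.norm_image_sub_le_of_norm_hasDerivWithin_le hFd hnorm (convex_Icc 0 π) h0 ht
  have hFt : σ * |u t| ≤ ‖F t‖ := by
    have hnt : ‖F t‖ = ‖(σ : ℂ) * (u t : ℂ) + (u' t : ℂ) * Complex.I‖ := by
      rw [hF]; rw [norm_mul, hexp1, one_mul]
    rw [hnt]
    have hre : ((σ : ℂ) * (u t : ℂ) + (u' t : ℂ) * Complex.I).re = σ * u t := by simp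
    calc σ * |u t| = |σ * u t| := by rw [abs_mul, abs_of_pos hσ]
    _ = |((σ : ℂ) * (u t : ℂ) + (u' t : ℂ) * Complex.I).re| := by rw [hre]
    _ ≤ _ := Complex.abs_re_le_norm _
  have hF0 : ‖F 0‖ ≤ σ * |u 0| + |u' 0| := by
    rw [hF]
    simp only [Complex.ofReal_zero, mul_zero, zero_mul, Complex.exp_zero, one_mul]
    calc ‖(σ : ℂ) * (u 0 : ℂ) + (u' 0 : ℂ) * Complex.I‖
        ≤ ‖(σ : ℂ) * (u 0 : ℂ)‖ + ‖(u' 0 : ℂ) * Complex.I‖ := norm_add_le _ _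
    _ = σ * |u 0| + |u' 0| := by
        simp [Complex.norm_real, Real.norm_eq_abs, abs_of_pos hσ]
  have ht' : ‖t - 0‖ ≤ π := by
    rw [sub_zero, Real.norm_eq_abs, abs_of_nonneg ht.1]; exact ht.2
  have hG0 : 0 ≤ G := le_trans (abs_nonneg _) (hg 0 h0)
  calc σ * |u t| ≤ ‖F t‖ := hFt
  _ ≤ ‖F t - F 0‖ + ‖F 0‖ := by
      simpa using norm_add_le (F t - F 0) (F 0)
  _ ≤ G * π + (σ * |u 0| + |u' 0|) := by
      have : ‖F t - F 0‖ ≤ G * π := key.trans (by nlinarith)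
      linarith
  _ = σ * |u 0| + |u' 0| + G * π := by ring

private lemma biSup_le' {g : ℝ → ℝ} {S : Set ℝ} {C : ℝ} (hC : 0 ≤ C)
    (h : ∀ x ∈ S, g x ≤ C) : (⨆ x ∈ S, g x) ≤ C :=
  Real.iSup_le (fun x => Real.iSup_le (fun hx => h x hx) hC) hC

private lemma le_biSup' {g : ℝ → ℝ} {S : Set ℝ} {C : ℝ} (h : ∀ x ∈ S, g x ≤ C)
    {x : ℝ} (hx : x ∈ S) : g x ≤ ⨆ y ∈ S, g y := by
  have hb : BddAbove (Set.range fun y => ⨆ _ : y ∈ S, g y) := by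
    refine ⟨max C 0, ?_⟩
    rintro _ ⟨y, rfl⟩
    exact Real.iSup_le (fun hy => (h y hy).trans (le_max_left _ _)) (le_max_right _ _)
  have he : g x = ⨆ _ : x ∈ S, g x := by
    haveI : Nonempty (x ∈ S) := ⟨hx⟩
    rw [ciSup_const]
  rw [he]
  exact le_ciSup hb x

private lemma biSup2_le' {g : ℝ → ℝ → ℝ} {S T : Set ℝ} {C : ℝ} (hC : 0 ≤ C)
    (h : ∀ x ∈ S, ∀ t ∈ T, g x t ≤ C) : (⨆ x ∈ S, ⨆ t ∈ T, g x t) ≤ C :=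
  biSup_le' hC (fun x hx => biSup_le' hC (h x hx))

private lemma le_biSup2' {g : ℝ → ℝ → ℝ} {S T : Set ℝ} {C : ℝ}
    (h : ∀ x ∈ S, ∀ t ∈ T, g x t ≤ C) {x t : ℝ} (hx : x ∈ S) (ht : t ∈ T) :
    g x t ≤ ⨆ y ∈ S, ⨆ z ∈ T, g y z := by
  have h1 : g x t ≤ ⨆ z ∈ T, g x z := le_biSup' (h x hx) ht
  have h2 : ∀ y ∈ S, (⨆ z ∈ T, g y z) ≤ max C 0 := fun y hy =>
    biSup_le' (le_max_right _ _) (fun z hz => (h y hy z hz).trans (le_max_left _ _))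
  exact h1.trans (le_biSup' h2 hx)

set_option maxHeartbeats 1600000 in
/-- The series Σ_{n=0}^∞ sup_{x,t∈[0,π]} |Δ_n(x,t)| converges, where
Δ_n(x,t) = cos(ρ_n x)(c(ρ_n,t) − cos(ρ_n t))/α_n − cos(nx)(c(n,t) − cos(nt))/α_n^0;
i.e., the Δ_n form an absolutely and uniformly convergent series of continuous
functions on [0,π]². -/
theorem stmt_12 (q : ℝ → ℝ) (hq : ContinuousOn q (Set.Icc 0 π)) (h : ℝ)
    (c c' : ℝ → ℝ → ℝ)
    (hc_init : ∀ ρ' : ℝ, c ρ' 0 = 1 ∧ c' ρ' 0 = h)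
    (hc_deriv : ∀ ρ' : ℝ, ∀ x ∈ Set.Icc (0:ℝ) π,
      HasDerivWithinAt (c ρ') (c' ρ' x) (Set.Icc 0 π) x)
    (hc_deriv2 : ∀ ρ' : ℝ, ∀ x ∈ Set.Icc (0:ℝ) π,
      HasDerivWithinAt (c' ρ') (q x * c ρ' x - ρ' ^ 2 * c ρ' x) (Set.Icc 0 π) x)
    (ω : ℝ) (ρ α : ℕ → ℝ) (hρ : ∀ n, 0 < ρ n) (hα : ∀ n, 0 < α n)
    (k K : ℕ → ℝ) (hk : Summable (fun n => (k n) ^ 2)) (hK : Summable (fun n => (K n) ^ 2))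
    (hρa : ∀ n : ℕ, 1 ≤ n → ρ n = n + ω / (π * n) + k n / n)
    (hαa : ∀ n : ℕ, 1 ≤ n → α n = π / 2 + K n / n)
    (α₀ : ℕ → ℝ) (hα₀0 : α₀ 0 = π) (hα₀ : ∀ n : ℕ, 1 ≤ n → α₀ n = π / 2) :
    Summable (fun n : ℕ => ⨆ x ∈ Set.Icc (0:ℝ) π, ⨆ t ∈ Set.Icc (0:ℝ) π,
      |cos (ρ n * x) * (c (ρ n) t - cos (ρ n * t)) / α n -
        cos (n * x) * (c n t - cos (n * t)) / α₀ n|) ∧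
    (∀ n : ℕ, ContinuousOn
      (fun p : ℝ × ℝ =>
        cos (ρ n * p.1) * (c (ρ n) p.2 - cos (ρ n * p.2)) / α n -
          cos (n * p.1) * (c n p.2 - cos (n * p.2)) / α₀ n)
      (Set.Icc (0:ℝ) π ×ˢ Set.Icc (0:ℝ) π)) ∧
    TendstoUniformlyOn
      (fun (N : ℕ) (p : ℝ × ℝ) => ∑ n ∈ Finset.range (N + 1),
        (cos (ρ n * p.1) * (c (ρ n) p.2 - cos (ρ n * p.2)) / α n -
          cos (n * p.1) * (c n p.2 - cos (n * p.2)) / α₀ n))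
      (fun p : ℝ × ℝ => ∑' n : ℕ,
        (cos (ρ n * p.1) * (c (ρ n) p.2 - cos (ρ n * p.2)) / α n -
          cos (n * p.1) * (c n p.2 - cos (n * p.2)) / α₀ n))
      atTop (Set.Icc (0:ℝ) π ×ˢ Set.Icc (0:ℝ) π) := by
  have hpi : (0:ℝ) < π := Real.pi_pos
  have h0mem : (0:ℝ) ∈ Set.Icc (0:ℝ) π := ⟨le_refl _, hpi.le⟩
  have hccont : ∀ r : ℝ, ContinuousOn (c r) (Set.Icc 0 π) :=
    fun r x hx => (hc_deriv r x hx).continuousWithinAt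
  -- Part 2: continuity
  have hcont : ∀ n : ℕ, ContinuousOn
      (fun p : ℝ × ℝ =>
        cos (ρ n * p.1) * (c (ρ n) p.2 - cos (ρ n * p.2)) / α n -
          cos (n * p.1) * (c n p.2 - cos (n * p.2)) / α₀ n)
      (Set.Icc (0:ℝ) π ×ˢ Set.Icc (0:ℝ) π) := by
    intro n
    have A : ∀ r : ℝ, Continuous fun p : ℝ × ℝ => Real.cos (r * p.1) :=
      fun r => Real.continuous_cos.comp (continuous_const.mul continuous_fst)
    have B : ∀ r : ℝ, ContinuousOn (fun p : ℝ × ℝ => c r p.2 - Real.cos (r * p.2))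
        (Set.Icc (0:ℝ) π ×ˢ Set.Icc (0:ℝ) π) := fun r =>
      ((hccont r).comp continuous_snd.continuousOn (fun p hp => hp.2)).sub
        (Real.continuous_cos.comp (continuous_const.mul continuous_snd)).continuousOn
    exact (((A (ρ n)).continuousOn.mul (B (ρ n))).div_const _).sub
      (((A n).continuousOn.mul (B n)).div_const _)
  set f : ℕ → ℝ × ℝ → ℝ := fun n p =>
    cos (ρ n * p.1) * (c (ρ n) p.2 - cos (ρ n * p.2)) / α n -
      cos (n * p.1) * (c n p.2 - cos (n * p.2)) / α₀ n with hfdef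
  set S : ℕ → ℝ := fun n => ⨆ x ∈ Set.Icc (0:ℝ) π, ⨆ t ∈ Set.Icc (0:ℝ) π, |f n (x, t)|
    with hSdef
  have hbound : ∀ n : ℕ, ∃ C : ℝ, ∀ x ∈ Set.Icc (0:ℝ) π, ∀ t ∈ Set.Icc (0:ℝ) π,
      |f n (x, t)| ≤ C := by
    intro n
    obtain ⟨C, hC⟩ := (isCompact_Icc.prod isCompact_Icc).exists_bound_of_continuousOn (hcont n)
    exact ⟨C, fun x hx t ht => by simpa [Real.norm_eq_abs] using hC (x, t) ⟨hx, ht⟩⟩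
  have hfS : ∀ n : ℕ, ∀ x ∈ Set.Icc (0:ℝ) π, ∀ t ∈ Set.Icc (0:ℝ) π, |f n (x, t)| ≤ S n := by
    intro n x hx t ht
    obtain ⟨C, hC⟩ := hbound n
    exact le_biSup2' hC hx ht
  have hS0 : ∀ n, 0 ≤ S n :=
    fun n => le_trans (abs_nonneg _) (hfS n 0 h0mem 0 h0mem)
  -- constants
  obtain ⟨Q0, hQ0⟩ := isCompact_Icc.exists_bound_of_continuousOn hq
  set Q : ℝ := max Q0 0 with hQdef
  have hQnn : 0 ≤ Q := le_max_right _ _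
  have hQ : ∀ x ∈ Set.Icc (0:ℝ) π, |q x| ≤ Q :=
    fun x hx => le_trans (by simpa [Real.norm_eq_abs] using hQ0 x hx) (le_max_left _ _)
  set M₀ : ℝ := 2 + 2 * |h| with hM₀def
  have hM₀nn : 0 ≤ M₀ := by positivity
  set C₁ : ℝ := |h| + Q * M₀ * π with hC₁def
  have hC₁nn : 0 ≤ C₁ := by positivity
  set R₀ : ℝ := 2 * (π * Q + |h| + 1) with hR₀def
  have hR₀2 : 2 ≤ R₀ := by nlinarith [abs_nonneg h, mul_nonneg hpi.le hQnn]
  set D : ℝ := |ω| / π + 1 with hDdef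
  have hD1 : 1 ≤ D := by
    rw [hDdef]
    have : 0 ≤ |ω| / π := by positivity
    linarith
  set E : ℝ := Q * (3 * C₁ + π * D) + 6 * D * C₁ with hEdef
  have hEnn : 0 ≤ E := by positivity
  set Ct : ℝ := 8 * D * C₁ + 4 * E + 8 * C₁ / π ^ 2 with hCtdef
  have hCtnn : 0 ≤ Ct := by positivity
  have hc_deriv2' : ∀ r : ℝ, ∀ t ∈ Set.Icc (0:ℝ) π,
      HasDerivWithinAt (c' r) (-r^2 * c r t + q t * c r t) (Set.Icc 0 π) t := by
    intro r t ht
    have := hc_deriv2 r t ht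
    convert this using 1
    ring
  -- uniform bound on c
  have hM : ∀ r : ℝ, R₀ ≤ r → ∀ t ∈ Set.Icc (0:ℝ) π, |c r t| ≤ M₀ := by
    intro r hr
    have hrpos : 0 < r := lt_of_lt_of_le (by linarith) hr
    obtain ⟨t₀, ht₀, hmax⟩ := isCompact_Icc.exists_isMaxOn (Set.nonempty_Icc.2 hpi.le)
      ((hccont r).abs)
    set M : ℝ := |c r t₀| with hMdef
    have hMbd : ∀ t ∈ Set.Icc (0:ℝ) π, |c r t| ≤ M := fun t ht => hmax ht
    have hen := energy r hrpos (c r) (c' r) (fun t => q t * c r t) (Q * M)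
      (hc_deriv r) (hc_deriv2' r)
      (fun t ht => by
        rw [abs_mul]
        exact mul_le_mul (hQ t ht) (hMbd t ht) (abs_nonneg _) hQnn)
    have h1 := hen t₀ ht₀
    rw [(hc_init r).1, (hc_init r).2] at h1
    have hM1 : 1 ≤ M := by
      have := hMbd 0 h0mem
      rw [(hc_init r).1] at this
      simpa using this
    have hMM₀ : M ≤ M₀ := by
      simp only [abs_one] at h1
      nlinarith [abs_nonneg h, mul_nonneg hpi.le hQnn, hM1]
    exact fun t ht => (hMbd t ht).trans hMM₀
  -- bound |c r t - cos (r t)| ≤ C₁ / r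
  have hU : ∀ r : ℝ, R₀ ≤ r → ∀ t ∈ Set.Icc (0:ℝ) π, |c r t - cos (r * t)| ≤ C₁ / r := by
    intro r hr
    have hrpos : 0 < r := lt_of_lt_of_le (by linarith) hr
    have hen := energy r hrpos (fun t => c r t - cos (r * t))
      (fun t => c' r t + r * sin (r * t)) (fun t => q t * c r t) (Q * M₀)
      (fun t ht => by
        have := (hc_deriv r t ht).sub (hasDerivWithinAt_coscos r t _)
        refine this.congr_deriv ?_; ring)
      (fun t ht => by
        have := (hc_deriv2 r t ht).add ((hasDerivWithinAt_sinsin r t _).const_mul r)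
        refine this.congr_deriv ?_; ring)
      (fun t ht => by
        rw [abs_mul]
        exact mul_le_mul (hQ t ht) (hM r hr t ht) (abs_nonneg _) hQnn)
    intro t ht
    have h1 := hen t ht
    have h0' : c r 0 - cos (r * 0) = 0 := by
      rw [(hc_init r).1]; simp
    have h0'' : c' r 0 + r * sin (r * 0) = h := by
      rw [(hc_init r).2]; simp
    rw [h0', h0''] at h1
    simp only [abs_zero, mul_zero, zero_add] at h1
    rw [le_div_iff₀ hrpos]
    calc |c r t - cos (r * t)| * r = r * |c r t - cos (r * t)| := by ring
    _ ≤ |h| + Q * M₀ * π := h1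
    _ = C₁ := rfl
  -- choose N₀
  have hkev : ∀ᶠ n : ℕ in atTop, |k n| ≤ 1 := by
    have := hk.tendsto_atTop_zero.eventually (gt_mem_nhds (show (0:ℝ) < 1 by norm_num))
    exact this.mono (fun n hn => (sq_le_one_iff_abs_le_one _).1 (le_of_lt hn))
  have hKev : ∀ᶠ n : ℕ in atTop, |K n| ≤ 1 := by
    have := hK.tendsto_atTop_zero.eventually (gt_mem_nhds (show (0:ℝ) < 1 by norm_num))
    exact this.mono (fun n hn => (sq_le_one_iff_abs_le_one _).1 (le_of_lt hn))
  have hNev : ∀ᶠ n : ℕ in atTop, R₀ + D + 2 ≤ (n:ℝ) :=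
    tendsto_natCast_atTop_atTop.eventually_ge_atTop _
  have h1ev : ∀ᶠ n : ℕ in atTop, 1 ≤ n := eventually_ge_atTop 1
  obtain ⟨N₀, hN₀⟩ := eventually_atTop.1 (hkev.and (hKev.and (hNev.and h1ev)))
  -- key estimate
  have key : ∀ n : ℕ, N₀ ≤ n → ∀ x ∈ Set.Icc (0:ℝ) π, ∀ t ∈ Set.Icc (0:ℝ) π,
      |f n (x, t)| ≤ Ct / (n:ℝ)^2 := by
    intro n hn x hx t ht
    obtain ⟨hkn, hKn, hnR, hn1⟩ := hN₀ n hn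
    set σ : ℝ := (n : ℝ) with hσdef
    set r : ℝ := ρ n with hrdef
    have hσ1 : (1:ℝ) ≤ σ := by rw [hσdef]; exact_mod_cast hn1
    have hσpos : 0 < σ := lt_of_lt_of_le one_pos hσ1
    have hσ3 : 3 ≤ σ := by linarith
    have hrpos : 0 < r := hρ n
    have hdist : |r - σ| ≤ D / σ := by
      have heq : r - σ = ω / (π * σ) + k n / σ := by
        rw [hrdef, hρa n hn1]; ring
      rw [heq]
      calc |ω / (π * σ) + k n / σ| ≤ |ω / (π * σ)| + |k n / σ| := abs_add_le _ _
      _ ≤ |ω| / (π * σ) + 1 / σ := by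
          rw [abs_div, abs_div, abs_of_pos (show (0:ℝ) < π * σ by positivity),
            abs_of_pos hσpos]
          gcongr
      _ = D / σ := by
          rw [hDdef]
          field_simp
    have hDσ1 : D / σ ≤ 1 := by
      rw [div_le_one hσpos]; linarith
    have habs := abs_le.1 hdist
    have hrlow : σ - 1 ≤ r := by linarith [habs.1]
    have hrhigh : r ≤ σ + 1 := by linarith [habs.2]
    have hrR : R₀ ≤ r := by linarith
    have hσR : R₀ ≤ σ := by linarith
    have hinvr : 1 / r ≤ 2 / σ := by
      rw [div_le_div_iff₀ hrpos hσpos]; linarith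
    have hUr : ∀ t' ∈ Set.Icc (0:ℝ) π, |c r t' - cos (r * t')| ≤ 2 * C₁ / σ := by
      intro t' ht'
      refine (hU r hrR t' ht').trans ?_
      calc C₁ / r = C₁ * (1 / r) := by ring
      _ ≤ C₁ * (2 / σ) := mul_le_mul_of_nonneg_left hinvr hC₁nn
      _ = 2 * C₁ / σ := by ring
    have hUσ2 : ∀ t' ∈ Set.Icc (0:ℝ) π, |c σ t' - cos (σ * t')| ≤ C₁ / σ := hU σ hσR
    have hsq : |r^2 - σ^2| ≤ 3 * D := by
      have heq : r^2 - σ^2 = (r - σ) * (r + σ) := by ring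
      rw [heq, abs_mul, abs_of_pos (show (0:ℝ) < r + σ by linarith)]
      calc |r - σ| * (r + σ) ≤ (D / σ) * (3 * σ) := by
            apply mul_le_mul hdist (by linarith) (by linarith) (by positivity)
      _ = 3 * D := by field_simp
    have hcosdiff : ∀ a ∈ Set.Icc (0:ℝ) π, |cos (r * a) - cos (σ * a)| ≤ D / σ * π := by
      intro a ha
      calc |cos (r * a) - cos (σ * a)| ≤ |r * a - σ * a| := abs_cos_sub_cos_le' _ _
      _ = |r - σ| * |a| := by rw [← abs_mul]; congr 1; ring
      _ ≤ (D / σ) * π := by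
          apply mul_le_mul hdist _ (abs_nonneg _) (by positivity)
          rw [abs_of_nonneg ha.1]; exact ha.2
    have hcdiff : ∀ t' ∈ Set.Icc (0:ℝ) π, |c r t' - c σ t'| ≤ (3 * C₁ + π * D) / σ := by
      intro t' ht'
      have heq : c r t' - c σ t' = (c r t' - cos (r * t')) - (c σ t' - cos (σ * t'))
          + (cos (r * t') - cos (σ * t')) := by ring
      rw [heq]
      have h1 := hUr t' ht'
      have h2 := hUσ2 t' ht'
      have h3 := hcosdiff t' ht'
      have h4 : (3 * C₁ + π * D) / σ = 2 * C₁ / σ + C₁ / σ + D / σ * π := by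
        field_simp; ring
      calc |(c r t' - cos (r * t')) - (c σ t' - cos (σ * t')) + (cos (r * t') - cos (σ * t'))|
          ≤ |(c r t' - cos (r * t')) - (c σ t' - cos (σ * t'))| + |cos (r * t') - cos (σ * t')| :=
            abs_add_le _ _
      _ ≤ (|c r t' - cos (r * t')| + |c σ t' - cos (σ * t')|) + |cos (r * t') - cos (σ * t')| := by
            have := abs_sub (c r t' - cos (r * t')) (c σ t' - cos (σ * t'))
            linarith
      _ ≤ (3 * C₁ + π * D) / σ := by rw [h4]; linarith
    -- w bound via energy at frequency σ
    have hW : ∀ t' ∈ Set.Icc (0:ℝ) π,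
        |(c r t' - cos (r * t')) - (c σ t' - cos (σ * t'))| ≤ π * E / σ^2 := by
      have hgb : ∀ t' ∈ Set.Icc (0:ℝ) π,
          |q t' * (c r t' - c σ t') - (r^2 - σ^2) * (c r t' - cos (r * t'))| ≤ E / σ := by
        intro t' ht'
        calc |q t' * (c r t' - c σ t') - (r^2 - σ^2) * (c r t' - cos (r * t'))|
            ≤ |q t'| * |c r t' - c σ t'| + |r^2 - σ^2| * |c r t' - cos (r * t')| := by
              have := abs_sub (q t' * (c r t' - c σ t'))
                ((r^2 - σ^2) * (c r t' - cos (r * t')))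
              rw [abs_mul, abs_mul] at this
              exact this
        _ ≤ Q * ((3 * C₁ + π * D) / σ) + (3 * D) * (2 * C₁ / σ) := by
              apply add_le_add
              · exact mul_le_mul (hQ t' ht') (hcdiff t' ht') (abs_nonneg _) hQnn
              · exact mul_le_mul hsq (hUr t' ht') (abs_nonneg _) (by positivity)
        _ = E / σ := by rw [hEdef]; field_simp; ring
      have hen := energy σ hσpos
        (fun t' => c r t' - c σ t' - cos (r * t') + cos (σ * t'))
        (fun t' => c' r t' - c' σ t' + r * sin (r * t') - σ * sin (σ * t'))
        (fun t' => q t' * (c r t' - c σ t') - (r^2 - σ^2) * (c r t' - cos (r * t')))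
        (E / σ)
        (fun a ha => by
          have := (((hc_deriv r a ha).sub (hc_deriv σ a ha)).sub
            (hasDerivWithinAt_coscos r a _)).add (hasDerivWithinAt_coscos σ a _)
          refine this.congr_deriv ?_; ring)
        (fun a ha => by
          have := (((hc_deriv2 r a ha).sub (hc_deriv2 σ a ha)).add
            ((hasDerivWithinAt_sinsin r a _).const_mul r)).sub
            ((hasDerivWithinAt_sinsin σ a _).const_mul σ)
          refine this.congr_deriv ?_; ring)
        hgb
      intro t' ht'
      have h1 := hen t' ht'
      have e0 : c r 0 - c σ 0 - cos (r * 0) + cos (σ * 0) = 0 := by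
        rw [(hc_init r).1, (hc_init σ).1]; simp
      have e0' : c' r 0 - c' σ 0 + r * sin (r * 0) - σ * sin (σ * 0) = 0 := by
        rw [(hc_init r).2, (hc_init σ).2]; simp
      rw [e0, e0'] at h1
      simp only [abs_zero, mul_zero, zero_add, add_zero] at h1
      have heq : (c r t' - cos (r * t')) - (c σ t' - cos (σ * t'))
          = c r t' - c σ t' - cos (r * t') + cos (σ * t') := by ring
      rw [heq, le_div_iff₀ (show (0:ℝ) < σ^2 by positivity)]
      have h2 := mul_le_mul_of_nonneg_left h1 hσpos.le
      have h3 : σ * (E / σ * π) = π * E := by field_simp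
      calc |c r t' - c σ t' - cos (r * t') + cos (σ * t')| * σ^2
          = σ * (σ * |c r t' - c σ t' - cos (r * t') + cos (σ * t')|) := by ring
      _ ≤ σ * (E / σ * π) := h2
      _ = π * E := h3
    -- assemble
    have hαn : α n = π / 2 + K n / σ := hαa n hn1
    have hαpos := hα n
    have hαlow : π / 4 ≤ α n := by
      rw [hαn]
      have h1 : |K n / σ| ≤ 1 / σ := by
        rw [abs_div, abs_of_pos hσpos]
        gcongr
      have h2 := (abs_le.1 h1).1
      have h3 : 1 / σ ≤ 1 / 3 := by
        rw [div_le_div_iff₀ hσpos (by norm_num : (0:ℝ) < 3)]; linarith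
      linarith [Real.pi_gt_three, h2, h3]
    have hdα : |1 / α n - 2 / π| ≤ 8 / (π^2 * σ) := by
      have hnum : 1 / α n - 2 / π = (π - 2 * α n) / (α n * π) := by
        field_simp
      rw [hnum, abs_div, abs_of_pos (show (0:ℝ) < α n * π by positivity)]
      have hnum2 : |π - 2 * α n| ≤ 2 / σ := by
        rw [hαn]
        have heq : π - 2 * (π / 2 + K n / σ) = -(2 * (K n / σ)) := by ring
        rw [heq, abs_neg, abs_mul, abs_two, abs_div, abs_of_pos hσpos]
        calc 2 * (|K n| / σ) ≤ 2 * (1 / σ) := by gcongr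
        _ = 2 / σ := by ring
      calc |π - 2 * α n| / (α n * π) ≤ (2 / σ) / (π / 4 * π) :=
            div_le_div₀ (by positivity) hnum2 (by positivity) (by gcongr)
      _ = 8 / (π^2 * σ) := by field_simp; ring
    have hα₀n : α₀ n = π / 2 := hα₀ n hn1
    have hfix : f n (x, t) = (cos (r * x) - cos (σ * x)) * (c r t - cos (r * t)) / α n
        + cos (σ * x) * ((c r t - cos (r * t)) - (c σ t - cos (σ * t))) / α n
        + cos (σ * x) * (c σ t - cos (σ * t)) * (1 / α n - 2 / π) := by
      show cos (r * x) * (c r t - cos (r * t)) / α n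
          - cos (σ * x) * (c σ t - cos (σ * t)) / α₀ n = _
      rw [hα₀n]
      have hαne : α n ≠ 0 := ne_of_gt hαpos
      field_simp
      ring
    rw [hfix]
    have hT1 : |(cos (r * x) - cos (σ * x)) * (c r t - cos (r * t)) / α n|
        ≤ 8 * D * C₁ / σ^2 := by
      rw [abs_div, abs_mul, abs_of_pos hαpos]
      calc |cos (r * x) - cos (σ * x)| * |c r t - cos (r * t)| / α n
          ≤ (D / σ * π) * (2 * C₁ / σ) / (π / 4) :=
            div_le_div₀ (by positivity)
              (mul_le_mul (hcosdiff x hx) (hUr t ht) (abs_nonneg _) (by positivity))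
              (by positivity) hαlow
      _ = 8 * D * C₁ / σ^2 := by field_simp; ring
    have hT2 : |cos (σ * x) * ((c r t - cos (r * t)) - (c σ t - cos (σ * t))) / α n|
        ≤ 4 * E / σ^2 := by
      rw [abs_div, abs_mul, abs_of_pos hαpos]
      calc |cos (σ * x)| * |(c r t - cos (r * t)) - (c σ t - cos (σ * t))| / α n
          ≤ (1 * (π * E / σ^2)) / (π / 4) :=
            div_le_div₀ (by positivity)
              (mul_le_mul (Real.abs_cos_le_one _) (hW t ht) (abs_nonneg _) zero_le_one)
              (by positivity) hαlow
      _ = 4 * E / σ^2 := by field_simp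
    have hT3 : |cos (σ * x) * (c σ t - cos (σ * t)) * (1 / α n - 2 / π)|
        ≤ (8 * C₁ / π^2) / σ^2 := by
      rw [abs_mul, abs_mul]
      calc |cos (σ * x)| * |c σ t - cos (σ * t)| * |1 / α n - 2 / π|
          ≤ 1 * (C₁ / σ) * (8 / (π^2 * σ)) := by
            apply mul_le_mul _ hdα (abs_nonneg _) (by positivity)
            exact mul_le_mul (Real.abs_cos_le_one _) (hUσ2 t ht) (abs_nonneg _) zero_le_one
      _ = (8 * C₁ / π^2) / σ^2 := by field_simp
    have hsum3 : Ct / σ^2 = 8 * D * C₁ / σ^2 + 4 * E / σ^2 + (8 * C₁ / π^2) / σ^2 := by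
      rw [hCtdef]; field_simp
    calc |(cos (r * x) - cos (σ * x)) * (c r t - cos (r * t)) / α n
          + cos (σ * x) * ((c r t - cos (r * t)) - (c σ t - cos (σ * t))) / α n
          + cos (σ * x) * (c σ t - cos (σ * t)) * (1 / α n - 2 / π)|
        ≤ |(cos (r * x) - cos (σ * x)) * (c r t - cos (r * t)) / α n
          + cos (σ * x) * ((c r t - cos (r * t)) - (c σ t - cos (σ * t))) / α n|
          + |cos (σ * x) * (c σ t - cos (σ * t)) * (1 / α n - 2 / π)| := abs_add_le _ _
    _ ≤ |(cos (r * x) - cos (σ * x)) * (c r t - cos (r * t)) / α n|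
          + |cos (σ * x) * ((c r t - cos (r * t)) - (c σ t - cos (σ * t))) / α n|
          + |cos (σ * x) * (c σ t - cos (σ * t)) * (1 / α n - 2 / π)| := by
        have := abs_add_le ((cos (r * x) - cos (σ * x)) * (c r t - cos (r * t)) / α n)
          (cos (σ * x) * ((c r t - cos (r * t)) - (c σ t - cos (σ * t))) / α n)
        linarith
    _ ≤ Ct / σ^2 := by rw [hsum3]; linarith
  -- summability
  have hSle : ∀ n, N₀ ≤ n → S n ≤ Ct / (n:ℝ)^2 := by
    intro n hn
    exact biSup2_le' (by positivity) (key n hn)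
  have hsum : Summable S := by
    rw [← summable_nat_add_iff N₀]
    apply Summable.of_nonneg_of_le (fun i => hS0 _)
      (fun i => hSle (i + N₀) (Nat.le_add_left _ _))
    have base : Summable (fun n : ℕ => Ct / (n:ℝ)^2) := by
      have h2 : Summable (fun n : ℕ => 1 / (n:ℝ)^2) := by
        exact_mod_cast summable_one_div_nat_pow.2 one_lt_two
      simpa [div_eq_mul_inv, one_div, mul_comm] using h2.mul_left Ct
    exact (summable_nat_add_iff N₀).2 base
  refine ⟨hsum, hcont, ?_⟩
  have huc := tendstoUniformlyOn_tsum_nat (f := f) hsum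
    (fun n p hp => by
      have hp' : p.1 ∈ Set.Icc (0:ℝ) π ∧ p.2 ∈ Set.Icc (0:ℝ) π := hp
      have := hfS n p.1 hp'.1 p.2 hp'.2
      simpa [Real.norm_eq_abs] using this)
  exact fun v hv => (tendsto_add_atTop_nat 1).eventually (huc v hv)
end

section
/- Let g(x,t) = (x/2) Σ_{k=0}^∞ ((x² − t²)/4)^k / (k!·(k+1)!) for 0 ≤ t ≤ x (this equals x·I₁(√(x²−t²))/√(x²−t²), where I₁ is the modified Bessel function of the first kind, and g(x,x) = x/2). Then for every x ≥ 0: (i) for every real ρ with |ρ| ≥ 1, cos( √(ρ² − 1)·x ) = cos(ρx) + ∫_0^x g(x,s) cos(ρs) ds; and (ii) cosh x = 1 + ∫_0^x g(x,s) ds. -/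
open Real intervalIntegral MeasureTheory

noncomputable def Akm (k m : ℕ) : ℝ :=
  2 * 4 ^ k * (Nat.factorial k) * (Nat.factorial (2*m)) * (Nat.factorial (m+k+1)) /
    ((Nat.factorial m) * (Nat.factorial (2*m+2*k+2)))

lemma Akm_zero (m : ℕ) : Akm 0 m = 1 / (2*(m:ℝ)+1) := by
  unfold Akm
  have e2 : 2*m+2*0+2 = (2*m+1)+1 := by omega
  have e1 : m+0+1 = m+1 := by omega
  rw [e1, e2]
  have f1 : ((Nat.factorial (m+1)):ℝ) = ((m:ℝ)+1) * Nat.factorial m := by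
    rw [Nat.factorial_succ]; push_cast; ring
  have f2 : ((Nat.factorial ((2*m+1)+1)):ℝ)
      = (2*(m:ℝ)+2) * (2*(m:ℝ)+1) * Nat.factorial (2*m) := by
    rw [Nat.factorial_succ, Nat.factorial_succ]; push_cast; ring
  rw [f1, f2]
  have h1 : ((Nat.factorial m):ℝ) ≠ 0 := by exact_mod_cast (Nat.factorial_ne_zero m)
  have h2 : ((Nat.factorial (2*m)):ℝ) ≠ 0 := by exact_mod_cast (Nat.factorial_ne_zero (2*m))
  have h3 : (2*(m:ℝ)+1) ≠ 0 := by positivity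
  have h4 : (2*(m:ℝ)+2) ≠ 0 := by positivity
  have h5 : ((m:ℝ)+1) ≠ 0 := by positivity
  field_simp
  ring

lemma Akm_succ (k m : ℕ) : Akm (k+1) m = (2*(k:ℝ)+2)/(2*m+1) * Akm k (m+1) := by
  have e1 : (m+1)+k+1 = m+k+2 := by omega
  have e2 : 2*(m+1)+2*k+2 = 2*m+2*k+4 := by omega
  have e3 : m+(k+1)+1 = m+k+2 := by omega
  have e4 : 2*m+2*(k+1)+2 = 2*m+2*k+4 := by omega
  unfold Akm
  rw [e1, e2, e3, e4]
  have f1 : ((Nat.factorial (k+1)):ℝ) = ((k:ℝ)+1) * Nat.factorial k := by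
    rw [Nat.factorial_succ]; push_cast; ring
  have f2 : ((Nat.factorial (m+1)):ℝ) = ((m:ℝ)+1) * Nat.factorial m := by
    rw [Nat.factorial_succ]; push_cast; ring
  have f3 : ((Nat.factorial (2*(m+1))):ℝ)
      = (2*(m:ℝ)+2) * (2*(m:ℝ)+1) * Nat.factorial (2*m) := by
    have e : 2*(m+1) = (2*m+1)+1 := by omega
    rw [e, Nat.factorial_succ, Nat.factorial_succ]; push_cast; ring
  rw [f1, f2, f3]
  have h1 : ((Nat.factorial m):ℝ) ≠ 0 := by exact_mod_cast (Nat.factorial_ne_zero m)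
  have h2 : ((Nat.factorial (2*m)):ℝ) ≠ 0 := by exact_mod_cast (Nat.factorial_ne_zero (2*m))
  have h6 : ((Nat.factorial (2*m+2*k+4)):ℝ) ≠ 0 := by
    exact_mod_cast (Nat.factorial_ne_zero (2*m+2*k+4))
  have h3 : (2*(m:ℝ)+1) ≠ 0 := by positivity
  have h5 : ((m:ℝ)+1) ≠ 0 := by positivity
  field_simp
  ring

lemma J_eq (x : ℝ) : ∀ k m : ℕ,
    (∫ s in (0:ℝ)..x, (x^2 - s^2)^k * s^(2*m)) = Akm k m * x^(2*k+2*m+1) := by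
  intro k
  induction k with
  | zero =>
    intro m
    simp only [pow_zero, one_mul, integral_pow]
    rw [Akm_zero]
    have h0 : (0:ℝ)^(2*m+1) = (0:ℝ) := zero_pow (by omega)
    rw [h0]
    have h3 : (2*(m:ℝ)+1) ≠ 0 := by positivity
    have hc : ((2*m:ℕ):ℝ) + 1 = 2*(m:ℝ)+1 := by push_cast; ring
    rw [hc]
    have he : 2*0+2*m+1 = 2*m+1 := by omega
    rw [he]
    field_simp
    simp
  | succ k ih =>
    intro m
    have hu : ∀ s ∈ Set.uIcc (0:ℝ) x, HasDerivAt (fun s => (x^2 - s^2)^(k+1))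
        (-(2*(k:ℝ)+2) * s * (x^2 - s^2)^k) s := by
      intro s _
      have h : HasDerivAt (fun s : ℝ => x^2 - s^2) (-(2*s)) s := by
        simpa using ((hasDerivAt_pow 2 s).const_sub (x^2))
      have := h.pow (k+1)
      refine this.congr_deriv ?_
      push_cast
      ring
    have hv : ∀ s ∈ Set.uIcc (0:ℝ) x, HasDerivAt (fun s : ℝ => s^(2*m+1) / (2*(m:ℝ)+1))
        (s^(2*m)) s := by
      intro s _
      have h := (hasDerivAt_pow (2*m+1) s).div_const (2*(m:ℝ)+1)
      refine h.congr_deriv ?_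
      have hne : (2*(m:ℝ)+1) ≠ 0 := by positivity
      field_simp
      push_cast
      ring
    have hIBP := intervalIntegral.integral_mul_deriv_eq_deriv_mul hu hv
      (by apply Continuous.intervalIntegrable; continuity)
      (by apply Continuous.intervalIntegrable; continuity)
    rw [hIBP]
    have hz1 : (x^2 - x^2)^(k+1) = 0 := by simp
    have hz2 : (0:ℝ)^(2*m+1) / (2*(m:ℝ)+1) = 0 := by
      rw [zero_pow (by omega : 2*m+1 ≠ 0)]; simp
    have hmain : (∫ s in (0:ℝ)..x, (-(2*(k:ℝ)+2) * s * (x^2-s^2)^k) * (s^(2*m+1)/(2*(m:ℝ)+1)))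
        = (-(2*(k:ℝ)+2)/(2*(m:ℝ)+1)) * ∫ s in (0:ℝ)..x, (x^2-s^2)^k * s^(2*(m+1)) := by
      rw [← intervalIntegral.integral_const_mul]
      apply integral_congr
      intro s _
      have hne : (2*(m:ℝ)+1) ≠ 0 := by positivity
      field_simp
      ring
    rw [hz1, hz2, hmain, ih (m+1), Akm_succ]
    have he : 2*k+2*(m+1)+1 = 2*(k+1)+2*m+1 := by omega
    rw [he]
    ring

lemma term_i (x ρ : ℝ) (k m : ℕ) :
    (x/2) / ((Nat.factorial k : ℝ) * (Nat.factorial (k+1)) * 4^k)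
      * ((-1)^m * ρ^(2*m) / (Nat.factorial (2*m)))
      * (Akm k m * x^(2*k+2*m+1))
    = (-1)^m * (((k+m+1).choose m : ℕ) : ℝ) * ρ^(2*m) * x^(2*(k+m+1))
        / (Nat.factorial (2*(k+m+1))) := by
  unfold Akm
  rw [show m+k+1 = k+m+1 by omega, show 2*m+2*k+2 = 2*(k+m+1) by omega]
  have hnat : (k+m+1).choose m * Nat.factorial m * Nat.factorial (k+1)
      = Nat.factorial (k+m+1) := by
    have h := Nat.choose_mul_factorial_mul_factorial (show m ≤ k+m+1 by omega)
    rwa [show k+m+1-m = k+1 by omega] at h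
  have hch : ((Nat.factorial (k+m+1)):ℝ)
      = (((k+m+1).choose m : ℕ) : ℝ) * (Nat.factorial m) * (Nat.factorial (k+1)) := by
    exact_mod_cast hnat.symm
  rw [hch]
  have hxp : x^(2*(k+m+1)) = x^(2*k+2*m+1) * x := by
    rw [show 2*(k+m+1) = (2*k+2*m+1)+1 by omega, pow_succ]
  rw [hxp]
  have h1 : ((Nat.factorial k):ℝ) ≠ 0 := by exact_mod_cast (Nat.factorial_ne_zero k)
  have h2 : ((Nat.factorial (k+1)):ℝ) ≠ 0 := by exact_mod_cast (Nat.factorial_ne_zero (k+1))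
  have h3 : ((Nat.factorial m):ℝ) ≠ 0 := by exact_mod_cast (Nat.factorial_ne_zero m)
  have h4 : ((Nat.factorial (2*m)):ℝ) ≠ 0 := by exact_mod_cast (Nat.factorial_ne_zero (2*m))
  have h5 : ((Nat.factorial (2*(k+m+1))):ℝ) ≠ 0 := by
    exact_mod_cast (Nat.factorial_ne_zero (2*(k+m+1)))
  have h6 : (4:ℝ)^k ≠ 0 := by positivity
  field_simp

lemma term_ii (x : ℝ) (k : ℕ) :
    (x/2) / ((Nat.factorial k : ℝ) * (Nat.factorial (k+1)) * 4^k)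
      * (Akm k 0 * x^(2*k+2*0+1))
    = x^(2*(k+1)) / (Nat.factorial (2*(k+1))) := by
  unfold Akm
  rw [show (0:ℕ)+k+1 = k+1 by omega, show 2*0+2*k+2 = 2*(k+1) by omega,
    show 2*0 = 0 by omega, show 2*k+2*0+1 = 2*k+1 by omega]
  have hxp : x^(2*(k+1)) = x^(2*k+1) * x := by
    rw [show 2*(k+1) = (2*k+1)+1 by omega, pow_succ]
  rw [hxp, Nat.factorial_zero]
  have h1 : ((Nat.factorial k):ℝ) ≠ 0 := by exact_mod_cast (Nat.factorial_ne_zero k)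
  have h2 : ((Nat.factorial (k+1)):ℝ) ≠ 0 := by exact_mod_cast (Nat.factorial_ne_zero (k+1))
  have h5 : ((Nat.factorial (2*(k+1))):ℝ) ≠ 0 := by
    exact_mod_cast (Nat.factorial_ne_zero (2*(k+1)))
  have h6 : (4:ℝ)^k ≠ 0 := by positivity
  field_simp

lemma one_le_fact_cast (n : ℕ) : (1:ℝ) ≤ (Nat.factorial n : ℝ) := by
  exact_mod_cast Nat.factorial_pos n

lemma summable_norm_a (c : ℝ) :
    Summable fun k : ℕ => ‖c^k / ((Nat.factorial k : ℝ) * (Nat.factorial (k+1)))‖ := by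
  apply Summable.of_nonneg_of_le (fun _ => norm_nonneg _) (fun k => ?_)
    (Real.summable_pow_div_factorial |c|)
  rw [norm_div, norm_pow]
  simp only [Real.norm_eq_abs]
  rw [abs_of_nonneg (by positivity : (0:ℝ) ≤ (Nat.factorial k : ℝ) * (Nat.factorial (k+1)))]
  gcongr
  exact le_mul_of_one_le_right (by positivity) (one_le_fact_cast (k+1))

lemma summable_norm_cosTerm (y : ℝ) :
    Summable fun m : ℕ => ‖(-1)^m * y^(2*m) / ((Nat.factorial (2*m)) : ℝ)‖ := by
  apply Summable.of_nonneg_of_le (fun _ => norm_nonneg _) (fun m => ?_)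
    (Real.hasSum_cosh |y|).summable
  rw [norm_div, norm_mul, norm_pow, norm_pow, norm_neg, norm_one, one_pow, one_mul]
  simp only [Real.norm_eq_abs]
  rw [abs_of_nonneg (by positivity : (0:ℝ) ≤ ((Nat.factorial (2*m)) : ℝ))]

lemma swap_i (x ρ : ℝ) (hx : 0 ≤ x) :
    (∫ s in (0:ℝ)..x,
      (x / 2 * ∑' k : ℕ, ((x ^ 2 - s ^ 2) / 4) ^ k /
        ((Nat.factorial k : ℝ) * (Nat.factorial (k + 1) : ℝ))) * Real.cos (ρ * s))
    = ∑' p : ℕ × ℕ,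
        ((x/2) / ((Nat.factorial p.1 : ℝ) * (Nat.factorial (p.1+1)) * 4^p.1)
          * ((-1)^p.2 * ρ^(2*p.2) / (Nat.factorial (2*p.2)))
          * ∫ s in (0:ℝ)..x, (x^2 - s^2)^p.1 * s^(2*p.2)) := by
  set w : ℕ × ℕ → ℝ → ℝ := fun p s =>
    (x / 2 * (((x ^ 2 - s ^ 2) / 4) ^ p.1 /
      ((Nat.factorial p.1 : ℝ) * (Nat.factorial (p.1 + 1) : ℝ)))) *
    ((-1)^p.2 * (ρ*s)^(2*p.2) / (Nat.factorial (2*p.2) : ℝ)) with hw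
  -- pointwise expansion
  have hpt : ∀ s : ℝ,
      (x / 2 * ∑' k : ℕ, ((x ^ 2 - s ^ 2) / 4) ^ k /
        ((Nat.factorial k : ℝ) * (Nat.factorial (k + 1) : ℝ))) * Real.cos (ρ * s)
      = ∑' p : ℕ × ℕ, w p s := by
    intro s
    rw [Real.cos_eq_tsum (ρ*s), mul_assoc,
      tsum_mul_tsum_of_summable_norm (summable_norm_a ((x^2-s^2)/4)) (summable_norm_cosTerm (ρ*s)),
      ← tsum_mul_left]
    exact tsum_congr fun p => by rw [hw]; ring
  simp only [hpt]
  rw [intervalIntegral.integral_of_le hx]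
  -- swap
  have hInt : ∀ p : ℕ × ℕ, Integrable (w p) (volume.restrict (Set.Ioc (0:ℝ) x)) := by
    intro p
    exact ((by continuity : Continuous (w p)).integrableOn_Ioc : IntegrableOn (w p) _)
  set f : ℕ → ℝ := fun k => (x/2) * ((x^2/4)^k / (Nat.factorial k : ℝ)) with hf
  set gm : ℕ → ℝ := fun m => (|ρ| * x)^(2*m) / (Nat.factorial (2*m) : ℝ) with hgm
  have hfs : Summable f := ((Real.summable_pow_div_factorial (x^2/4)).mul_left _)
  have hgs : Summable gm := (Real.hasSum_cosh (|ρ| * x)).summable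
  have hfg : Summable fun p : ℕ × ℕ => x * (f p.1 * gm p.2) :=
    ((hfs.mul_of_nonneg hgs (fun k => by rw [hf]; positivity)
      (fun m => by rw [hgm]; positivity)).mul_left x)
  have hbound : ∀ p : ℕ × ℕ, ∀ s ∈ Set.Ioc (0:ℝ) x, ‖w p s‖ ≤ f p.1 * gm p.2 := by
    rintro ⟨k, m⟩ s ⟨hs0, hsx⟩
    have hs0' : (0:ℝ) ≤ s := le_of_lt hs0
    have hd0 : (0:ℝ) ≤ x^2 - s^2 := by nlinarith
    have habs : ‖w (k,m) s‖ = x/2 * (((x^2-s^2)/4)^k /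
        ((Nat.factorial k : ℝ) * (Nat.factorial (k+1))))
        * ((|ρ| * s)^(2*m) / ((Nat.factorial (2*m)) : ℝ)) := by
      simp only [hw, Real.norm_eq_abs, abs_mul, abs_div, abs_pow, abs_neg, abs_one,
        one_pow, one_mul, Nat.abs_cast]
      rw [abs_of_nonneg hx, abs_of_nonneg hd0, abs_of_nonneg hs0']
      all_goals norm_num
    rw [habs]
    have hrhs : f k * gm m = x / 2 * ((x ^ 2 / 4) ^ k / (Nat.factorial k : ℝ))
        * ((|ρ| * x) ^ (2 * m) / (Nat.factorial (2 * m) : ℝ)) := by rw [hf, hgm]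
    rw [hrhs]
    have h1 : ((x^2-s^2)/4)^k / ((Nat.factorial k : ℝ) * (Nat.factorial (k+1)))
        ≤ (x^2/4)^k / (Nat.factorial k : ℝ) := by
      apply div_le_div₀ (by positivity)
        (pow_le_pow_left₀ (by linarith) (by linarith [sq_nonneg s]) k)
        (by positivity)
        (le_mul_of_one_le_right (by positivity) (one_le_fact_cast (k+1)))
    have h2 : (|ρ| * s)^(2*m) / ((Nat.factorial (2*m)) : ℝ)
        ≤ (|ρ| * x)^(2*m) / ((Nat.factorial (2*m)) : ℝ) := by
      apply div_le_div₀ (by positivity)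
        (pow_le_pow_left₀ (by positivity)
          (mul_le_mul_of_nonneg_left hsx (abs_nonneg ρ)) _)
        (by positivity) le_rfl
    have hA0 : (0:ℝ) ≤ ((x^2-s^2)/4)^k / ((Nat.factorial k : ℝ) * (Nat.factorial (k+1))) :=
      div_nonneg (pow_nonneg (by linarith) k) (by positivity)
    apply mul_le_mul
      (mul_le_mul le_rfl h1 hA0 (by linarith))
      h2 (by positivity)
      (mul_nonneg (by linarith) (by positivity))
  have hSumInt : Summable fun p : ℕ × ℕ => ∫ s, ‖w p s‖ ∂(volume.restrict (Set.Ioc (0:ℝ) x)) := by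
    apply Summable.of_nonneg_of_le
      (fun p => integral_nonneg (fun s => norm_nonneg _)) (fun p => ?_) hfg
    have hle : ∫ s, ‖w p s‖ ∂(volume.restrict (Set.Ioc (0:ℝ) x))
        ≤ ∫ _ in Set.Ioc (0:ℝ) x, (f p.1 * gm p.2) ∂volume := by
      apply setIntegral_mono_on (hInt p).norm (integrableOn_const (by
        rw [Real.volume_Ioc]; exact ENNReal.ofReal_ne_top)) measurableSet_Ioc
      exact hbound p
    calc ∫ s, ‖w p s‖ ∂(volume.restrict (Set.Ioc (0:ℝ) x))
        ≤ ∫ _ in Set.Ioc (0:ℝ) x, (f p.1 * gm p.2) ∂volume := hle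
      _ = x * (f p.1 * gm p.2) := by
          rw [setIntegral_const, measureReal_def, Real.volume_Ioc, smul_eq_mul, sub_zero,
            ENNReal.toReal_ofReal hx]
  rw [← MeasureTheory.integral_tsum_of_summable_integral_norm hInt hSumInt]
  apply tsum_congr
  intro p
  rw [← intervalIntegral.integral_of_le hx, ← intervalIntegral.integral_const_mul]
  apply intervalIntegral.integral_congr
  intro s _
  rw [hw]
  simp only []
  rw [mul_pow, div_pow]
  ring

noncomputable def Hterm (x ρ : ℝ) (n m : ℕ) : ℝ :=
  (-1)^m * ((n.choose m : ℕ) : ℝ) * ρ^(2*m) * x^(2*n) / (Nat.factorial (2*n))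

lemma Hterm_abs (x ρ : ℝ) (hx : 0 ≤ x) (n m : ℕ) :
    |Hterm x ρ n m| = ((n.choose m : ℕ) : ℝ) * (ρ^2)^m * x^(2*n) / (Nat.factorial (2*n)) := by
  unfold Hterm
  rw [abs_div, abs_mul, abs_mul, abs_mul, abs_pow, abs_pow, abs_pow, abs_neg, abs_one, one_pow,
    one_mul, Nat.abs_cast, abs_of_nonneg hx,
    abs_of_nonneg (by positivity : (0:ℝ) ≤ ((Nat.factorial (2*n)) : ℝ)), pow_mul, sq_abs]

noncomputable def Hfun (x ρ : ℝ) : ℕ × ℕ → ℝ :=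
  fun p => if p.2 ≤ p.1 then Hterm x ρ p.1 p.2 else 0

noncomputable def Dfun (x ρ : ℝ) : ℕ × ℕ → ℝ :=
  fun p => if p.2 = p.1 then Hterm x ρ p.1 p.2 else 0

noncomputable def Ofun (x ρ : ℝ) : ℕ × ℕ → ℝ :=
  fun p => if p.2 < p.1 then Hterm x ρ p.1 p.2 else 0

lemma Hfun_split (x ρ : ℝ) (p : ℕ × ℕ) :
    Hfun x ρ p = Dfun x ρ p + Ofun x ρ p := by
  unfold Hfun Dfun Ofun
  rcases lt_trichotomy p.2 p.1 with h | h | h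
  · rw [if_pos h.le, if_neg (by omega), if_pos h]; ring
  · rw [if_pos h.le, if_pos h, if_neg (by omega)]; ring
  · rw [if_neg (by omega), if_neg (by omega), if_neg (by omega)]; ring

lemma Hfun_row_vanish (x ρ : ℝ) (n : ℕ) :
    ∀ m ∉ Finset.range (n+1), Hfun x ρ (n, m) = 0 := by
  intro m hm
  rw [Finset.mem_range] at hm
  exact if_neg (by omega)

lemma Hfun_row_summable (x ρ : ℝ) (n : ℕ) :
    Summable fun m => Hfun x ρ (n, m) :=
  summable_of_ne_finset_zero (Hfun_row_vanish x ρ n)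

lemma Hfun_abs_row_sum (x ρ : ℝ) (hx : 0 ≤ x) (n : ℕ) :
    ∑' m, |Hfun x ρ (n, m)| = (ρ^2+1)^n * x^(2*n) / (Nat.factorial (2*n)) := by
  rw [tsum_eq_sum (s := Finset.range (n+1))
    (fun m hm => by rw [Hfun_row_vanish x ρ n m hm, abs_zero])]
  calc ∑ m ∈ Finset.range (n+1), |Hfun x ρ (n, m)|
      = ∑ m ∈ Finset.range (n+1),
          (ρ^2)^m * 1^(n-m) * ((n.choose m : ℕ) : ℝ) * (x^(2*n) / (Nat.factorial (2*n))) := by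
        apply Finset.sum_congr rfl
        intro m hm
        rw [Finset.mem_range] at hm
        unfold Hfun
        rw [if_pos (by omega : m ≤ n), Hterm_abs x ρ hx, one_pow]
        ring
    _ = (ρ^2+1)^n * x^(2*n) / (Nat.factorial (2*n)) := by
        rw [← Finset.sum_mul, ← add_pow]
        ring

lemma cosh_aux_summable (c x : ℝ) (hc : 0 ≤ c) (hx : 0 ≤ x) :
    Summable fun n : ℕ => c^n * x^(2*n) / (Nat.factorial (2*n)) := by
  apply ((Real.hasSum_cosh (Real.sqrt c * x)).summable).congr
  intro n
  rw [pow_mul, mul_pow, Real.sq_sqrt hc, mul_pow, ← pow_mul]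

lemma Hfun_abs_summable (x ρ : ℝ) (hx : 0 ≤ x) :
    Summable fun p : ℕ × ℕ => |Hfun x ρ p| := by
  apply (summable_prod_of_nonneg (fun p => abs_nonneg _)).2
  constructor
  · intro n
    exact summable_of_ne_finset_zero
      (fun m hm => by rw [Hfun_row_vanish x ρ n m hm, abs_zero])
  · apply Summable.congr (cosh_aux_summable (ρ^2+1) x (by positivity) hx)
    intro n
    exact (Hfun_abs_row_sum x ρ hx n).symm

lemma Hfun_summable (x ρ : ℝ) (hx : 0 ≤ x) : Summable (Hfun x ρ) :=
  (Hfun_abs_summable x ρ hx).of_abs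

lemma Dfun_summable (x ρ : ℝ) (hx : 0 ≤ x) : Summable (Dfun x ρ) := by
  apply Summable.of_abs
  apply Summable.of_nonneg_of_le (fun p => abs_nonneg _) (fun p => ?_)
    (Hfun_abs_summable x ρ hx)
  unfold Dfun Hfun
  rcases eq_or_ne p.2 p.1 with h | h
  · rw [if_pos h, if_pos (le_of_eq h)]
  · rw [if_neg h, abs_zero]; exact abs_nonneg _

lemma Ofun_summable (x ρ : ℝ) (hx : 0 ≤ x) : Summable (Ofun x ρ) := by
  apply Summable.of_abs
  apply Summable.of_nonneg_of_le (fun p => abs_nonneg _) (fun p => ?_)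
    (Hfun_abs_summable x ρ hx)
  unfold Ofun Hfun
  rcases lt_or_ge p.2 p.1 with h | h
  · rw [if_pos h, if_pos h.le]
  · rw [if_neg (by omega), abs_zero]; exact abs_nonneg _

lemma cos_eq_tsum_Hfun (x ρ : ℝ) (hx : 0 ≤ x) (hρ2 : 0 ≤ ρ^2 - 1) :
    Real.cos (Real.sqrt (ρ^2 - 1) * x) = ∑' p : ℕ × ℕ, Hfun x ρ p := by
  rw [Summable.tsum_prod' (Hfun_summable x ρ hx) (Hfun_row_summable x ρ), Real.cos_eq_tsum]
  apply tsum_congr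
  intro n
  rw [tsum_eq_sum (s := Finset.range (n+1)) (Hfun_row_vanish x ρ n)]
  have hrhs : ∑ m ∈ Finset.range (n+1), Hfun x ρ (n, m)
      = (-ρ^2+1)^n * (x^(2*n) / (Nat.factorial (2*n))) := by
    rw [add_pow, Finset.sum_mul]
    apply Finset.sum_congr rfl
    intro m hm
    rw [Finset.mem_range] at hm
    unfold Hfun Hterm
    rw [if_pos (by omega : m ≤ n), neg_pow, one_pow, pow_mul]
    ring
  rw [hrhs, pow_mul, mul_pow, Real.sq_sqrt hρ2, ← mul_pow]
  rw [show (-1 : ℝ) * ((ρ^2-1) * x^2) = (-ρ^2+1) * x^2 by ring, mul_pow, ← pow_mul]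
  ring

lemma Dfun_tsum (x ρ : ℝ) : ∑' p : ℕ × ℕ, Dfun x ρ p = Real.cos (ρ * x) := by
  have hinj : Function.Injective (fun n : ℕ => ((n, n) : ℕ × ℕ)) := by
    intro a b h
    simpa using congrArg Prod.fst h
  have hsupp : Function.support (Dfun x ρ) ⊆ Set.range (fun n : ℕ => ((n, n) : ℕ × ℕ)) := by
    intro p hp
    rcases eq_or_ne p.2 p.1 with h | h
    · exact ⟨p.1, Prod.ext rfl h.symm⟩
    · exact absurd (if_neg h) hp
  rw [← Function.Injective.tsum_eq hinj hsupp, Real.cos_eq_tsum]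
  apply tsum_congr
  intro n
  unfold Dfun Hterm
  rw [if_pos rfl, Nat.choose_self, mul_pow]
  push_cast
  ring

lemma Ofun_reindex (x ρ : ℝ) :
    ∑' p : ℕ × ℕ, Ofun x ρ (p.1 + p.2 + 1, p.2) = ∑' p : ℕ × ℕ, Ofun x ρ p := by
  apply Function.Injective.tsum_eq (g := fun p : ℕ × ℕ => ((p.1 + p.2 + 1, p.2) : ℕ × ℕ))
  · rintro ⟨a, b⟩ ⟨c, d⟩ h
    simp only [Prod.mk.injEq] at h
    obtain ⟨h1, h2⟩ := h
    simp only [Prod.mk.injEq]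
    omega
  · rintro ⟨a, b⟩ hp
    rcases lt_or_ge b a with h | h
    · refine ⟨(a - b - 1, b), ?_⟩
      show ((a - b - 1) + b + 1, b) = (a, b)
      rw [show a - b - 1 + b + 1 = a by omega]
    · exact absurd (if_neg (by simp; omega)) hp


/-- Let g(x,t) = (x/2) Σ_{k=0}^∞ ((x² − t²)/4)^k / (k!·(k+1)!)
(this equals x·I₁(√(x²−t²))/√(x²−t²), with g(x,x) = x/2).
Then for every x ≥ 0:
(i) for every real ρ with |ρ| ≥ 1,
    cos(√(ρ² − 1)·x) = cos(ρx) + ∫_0^x g(x,s) cos(ρs) ds; and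
(ii) cosh x = 1 + ∫_0^x g(x,s) ds. -/
theorem stmt_13 (g : ℝ → ℝ → ℝ)
    (hg : ∀ x t : ℝ, g x t =
      x / 2 * ∑' k : ℕ, ((x ^ 2 - t ^ 2) / 4) ^ k /
        ((Nat.factorial k : ℝ) * (Nat.factorial (k + 1) : ℝ))) :
    ∀ x : ℝ, 0 ≤ x →
      (∀ ρ : ℝ, 1 ≤ |ρ| →
        cos (Real.sqrt (ρ ^ 2 - 1) * x) =
          cos (ρ * x) + ∫ s in (0:ℝ)..x, g x s * cos (ρ * s)) ∧
      Real.cosh x = 1 + ∫ s in (0:ℝ)..x, g x s := by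
  intro x hx
  have hsum_expr : ∀ ρ : ℝ,
      (∫ s in (0:ℝ)..x,
        (x / 2 * ∑' k : ℕ, ((x ^ 2 - s ^ 2) / 4) ^ k /
          ((Nat.factorial k : ℝ) * (Nat.factorial (k + 1) : ℝ))) * Real.cos (ρ * s))
      = ∑' p : ℕ × ℕ, Ofun x ρ p := by
    intro ρ
    rw [swap_i x ρ hx, ← Ofun_reindex x ρ]
    apply tsum_congr
    rintro ⟨k, m⟩
    rw [J_eq x k m, term_i x ρ k m]
    show _ = Ofun x ρ (k + m + 1, m)
    unfold Ofun
    rw [if_pos (show m < k + m + 1 by omega)]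
    rfl
  constructor
  · intro ρ hρ
    have hρ2 : (0:ℝ) ≤ ρ^2 - 1 := by nlinarith [sq_abs ρ, abs_nonneg ρ]
    simp only [hg]
    rw [hsum_expr ρ, cos_eq_tsum_Hfun x ρ hx hρ2, tsum_congr (Hfun_split x ρ),
      Summable.tsum_add (Dfun_summable x ρ hx) (Ofun_summable x ρ hx), Dfun_tsum x ρ]
  · simp only [hg]
    have h1 : (∫ s in (0:ℝ)..x, x / 2 * ∑' k : ℕ, ((x ^ 2 - s ^ 2) / 4) ^ k /
          ((Nat.factorial k : ℝ) * (Nat.factorial (k + 1) : ℝ)))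
        = ∫ s in (0:ℝ)..x, (x / 2 * ∑' k : ℕ, ((x ^ 2 - s ^ 2) / 4) ^ k /
          ((Nat.factorial k : ℝ) * (Nat.factorial (k + 1) : ℝ))) * Real.cos (0 * s) := by
      apply intervalIntegral.integral_congr
      intro s _
      simp
    rw [h1, swap_i x 0 hx]
    have hinj0 : Function.Injective (fun k : ℕ => ((k, 0) : ℕ × ℕ)) := by
      intro a b h
      simpa using congrArg Prod.fst h
    have hsupp0 : Function.support (fun p : ℕ × ℕ =>
        ((x/2) / ((Nat.factorial p.1 : ℝ) * (Nat.factorial (p.1+1)) * 4^p.1)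
          * ((-1)^p.2 * (0:ℝ)^(2*p.2) / (Nat.factorial (2*p.2)))
          * ∫ s in (0:ℝ)..x, (x^2 - s^2)^p.1 * s^(2*p.2)))
        ⊆ Set.range (fun k : ℕ => ((k, 0) : ℕ × ℕ)) := by
      rintro ⟨a, b⟩ hp
      rcases eq_or_ne b 0 with h | h
      · exact ⟨a, by rw [h]⟩
      · refine absurd ?_ hp
        show _ * ((-1)^b * (0:ℝ)^(2*b) / (Nat.factorial (2*b))) * _ = 0
        rw [zero_pow (show 2*b ≠ 0 by omega)]
        simp
    have hzero : (∑' p : ℕ × ℕ,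
        ((x/2) / ((Nat.factorial p.1 : ℝ) * (Nat.factorial (p.1+1)) * 4^p.1)
          * ((-1)^p.2 * (0:ℝ)^(2*p.2) / (Nat.factorial (2*p.2)))
          * ∫ s in (0:ℝ)..x, (x^2 - s^2)^p.1 * s^(2*p.2)))
        = ∑' k : ℕ, x^(2*(k+1)) / (Nat.factorial (2*(k+1))) := by
      rw [← Function.Injective.tsum_eq hinj0 hsupp0]
      apply tsum_congr
      intro k
      show (x/2) / ((Nat.factorial k : ℝ) * (Nat.factorial (k+1)) * 4^k)
          * ((-1)^(0:ℕ) * (0:ℝ)^(2*0) / (Nat.factorial (2*0)))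
          * (∫ s in (0:ℝ)..x, (x^2 - s^2)^k * s^(2*0)) = _
      have hd : ((-1:ℝ)^(0:ℕ) * (0:ℝ)^(2*0) / ((Nat.factorial (2*0)) : ℝ)) = 1 := by norm_num
      rw [hd, mul_one, J_eq x k 0]
      exact term_ii x k
    rw [hzero, Real.cosh_eq_tsum, Summable.tsum_eq_zero_add (Real.hasSum_cosh x).summable]
    norm_num
end
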